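/- If D is a subset of a group G containing the identity, closed under inverses, and such that G is covered by n left translates of D, then D^{3n} equals the subgroup generated by D (where D^k denotes the set of products of k elements of D). -/
import Mathlib


open Pointwise

/-- If D ⊆ G contains 1, is symmetric, and G is covered by n left translates of D,
then D^(3n) equals the subgroup generated by D. -/
theorem stmt_1 {G : Type*} [Group G] (D : Set G) (n : ℕ)
    (h1 : (1 : G) ∈ D) (hsymm : D⁻¹ = D)
    (hcov : ∃ g : Fin n → G, ⋃ i, g i • D = Set.univ) :
    D ^ (3 * n) = (Subgroup.closure D : Set G) := by
  classical
  obtain ⟨g, hg⟩ := hcov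
  have hcover : ∀ x : G, ∃ i, x ∈ g i • D := by
    intro x
    have : x ∈ ⋃ i, g i • D := by rw [hg]; trivial
    simpa using this
  -- monotonicity of powers
  have hmono : ∀ a b : ℕ, a ≤ b → D ^ a ⊆ D ^ b := by
    intro a b hab
    induction b with
    | zero => simp [Nat.le_zero.mp hab]
    | succ b ih =>
      rcases Nat.lt_or_ge a (b + 1) with h | h
      · refine (ih (Nat.lt_succ_iff.mp h)).trans ?_
        rw [pow_succ]
        intro x hx
        exact ⟨x, hx, 1, h1, mul_one x⟩
      · have : a = b + 1 := le_antisymm hab h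
        simp [this]
  -- the counting function
  set f : ℕ → Finset (Fin n) :=
    fun k => Finset.univ.filter (fun i => ((g i • D) ∩ D ^ k).Nonempty) with hf
  have hfmono : ∀ a b : ℕ, a ≤ b → f a ⊆ f b := by
    intro a b hab i hi
    simp only [hf, Finset.mem_filter, Finset.mem_univ, true_and] at hi ⊢
    obtain ⟨x, hx1, hx2⟩ := hi
    exact ⟨x, hx1, hmono a b hab hx2⟩
  -- key step
  have hstep : ∀ m : ℕ, D ^ (m + 2) ≠ D ^ (m + 3) → (f m).card < (f (m + 3)).card := by
    intro m hne
    have hss : ∃ x, x ∈ D ^ (m + 3) ∧ x ∉ D ^ (m + 2) := by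
      by_contra h
      push_neg at h
      exact hne (le_antisymm (hmono _ _ (by omega)) h)
    obtain ⟨x, hx3, hx2⟩ := hss
    obtain ⟨i, hxi⟩ := hcover x
    obtain ⟨d, hd, hxd⟩ := hxi
    -- i ∈ f (m+3)
    have hi3 : i ∈ f (m + 3) := by
      simp only [hf, Finset.mem_filter, Finset.mem_univ, true_and]
      exact ⟨x, ⟨d, hd, hxd⟩, hx3⟩
    -- i ∉ f m
    have him : i ∉ f m := by
      simp only [hf, Finset.mem_filter, Finset.mem_univ, true_and]
      rintro ⟨y, ⟨d', hd', hyd'⟩, hym⟩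
      -- g i = y * d'⁻¹ ∈ D^m * D = D^(m+1)
      have hdi : d'⁻¹ ∈ D := by rw [← hsymm]; exact Set.inv_mem_inv.mpr hd'
      have hgi : g i ∈ D ^ (m + 1) := by
        rw [pow_succ]
        exact ⟨y, hym, d'⁻¹, hdi, by simp only [← hyd', smul_eq_mul, mul_inv_cancel_right]⟩
      have : x ∈ D ^ (m + 2) := by
        rw [pow_succ]
        exact ⟨g i, hgi, d, hd, hxd⟩
      exact hx2 this
    exact Finset.card_lt_card ⟨hfmono m (m + 3) (by omega), fun hsub => him (hsub hi3)⟩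
  -- there is a stabilization point k ≤ 3n
  have hstab : ∃ k, 1 ≤ k ∧ k ≤ 3 * n ∧ D ^ (k + 1) = D ^ k := by
    by_contra hcon
    push_neg at hcon
    have hchain : ∀ j : ℕ, j ≤ n → j + 1 ≤ (f (3 * j + 1)).card := by
      intro j hj
      induction j with
      | zero =>
        obtain ⟨i, hi⟩ := hcover 1
        have : i ∈ f 1 := by
          simp only [hf, Finset.mem_filter, Finset.mem_univ, true_and]
          exact ⟨1, hi, by simpa using h1⟩
        simpa using Finset.card_pos.mpr ⟨i, this⟩
      | succ j ih =>
        have hj' : j ≤ n := by omega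
        have hne : D ^ (3 * j + 1 + 2) ≠ D ^ (3 * j + 1 + 3) := by
          have := hcon (3 * j + 3) (by omega) (by omega)
          intro h
          apply this
          have e1 : 3 * j + 1 + 3 = (3 * j + 3) + 1 := by omega
          have e2 : 3 * j + 1 + 2 = 3 * j + 3 := by omega
          rw [e1, e2] at h
          exact h.symm
        have hlt := hstep (3 * j + 1) hne
        have e3 : 3 * j + 1 + 3 = 3 * (j + 1) + 1 := by omega
        rw [e3] at hlt
        omega
    have hfinal := hchain n le_rfl
    have hcard : (f (3 * n + 1)).card ≤ n := by
      calc (f (3 * n + 1)).card ≤ (Finset.univ : Finset (Fin n)).card :=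
            Finset.card_le_card (Finset.filter_subset _ _)
        _ = n := by simp
    omega
  obtain ⟨k, hk1, hk3, heq⟩ := hstab
  -- all higher powers equal D^k
  have hall : ∀ m, k ≤ m → D ^ m = D ^ k := by
    intro m hm
    induction m with
    | zero => omega
    | succ m ih =>
      rcases Nat.lt_or_ge k (m + 1) with h | h
      · have hkm : k ≤ m := by omega
        rw [pow_succ, ih hkm, ← pow_succ, heq]
      · exact congrArg _ (le_antisymm h hm)
  -- D^k is a subgroup
  have hinvk : (D ^ k)⁻¹ = D ^ k := by rw [← inv_pow, hsymm]
  set H : Subgroup G :=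
    { carrier := D ^ k
      one_mem' := hmono 0 k (by omega) (by simp)
      mul_mem' := by
        intro a b ha hb
        have : a * b ∈ D ^ (k + k) := by rw [pow_add]; exact Set.mul_mem_mul ha hb
        rwa [hall (k + k) (by omega)] at this
      inv_mem' := by
        intro a ha
        have ha' : a ∈ D ^ k := ha
        show a⁻¹ ∈ D ^ k
        rw [← hinvk]
        exact Set.inv_mem_inv.mpr ha' } with hH
  have hDk : D ⊆ D ^ k := by
    have := hmono 1 k hk1
    rwa [pow_one] at this
  have hsub : (Subgroup.closure D : Set G) ⊆ D ^ k := by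
    have := Subgroup.closure_le (K := H) |>.mpr hDk
    exact fun x hx => this hx
  have hsup : ∀ m : ℕ, D ^ m ⊆ (Subgroup.closure D : Set G) := by
    intro m
    induction m with
    | zero =>
      intro x hx
      simp only [pow_zero, Set.mem_one] at hx
      rw [hx]; exact one_mem _
    | succ m ih =>
      rw [pow_succ]
      rintro x ⟨a, ha, b, hb, rfl⟩
      exact mul_mem (ih ha) (Subgroup.subset_closure hb)
  rw [hall (3 * n) hk3]
  exact le_antisymm (hsup k) hsub
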